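/- Let q ∈ K^× not be a root of unity and let R = O_q(K^3) = K⟨x_1, x_2, x_3 : x_i x_j = q x_j x_i for i < j⟩, graded with deg x_i = 1. Every unipotent automorphism ψ of R has the form ψ(x_1) = x_1, ψ(x_2) = x_2 + ξ x_1 x_3 for some ξ ∈ K, ψ(x_3) = x_3. -/

import Mathlib

namespace QuantumAffine3Aux

variable {K R : Type*} [Field K] [Ring R] [Algebra K R]

def kap (m n : ℕ × ℕ × ℕ) : ℕ := n.1 * (m.2.1 + m.2.2) + n.2.1 * m.2.2


def Bm (x₁ x₂ x₃ : R) (m : ℕ × ℕ × ℕ) : R := x₁ ^ m.1 * x₂ ^ m.2.1 * x₃ ^ m.2.2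

lemma comm_pow {y x : R} {c : K} (h : y * x = c • (x * y)) :
    ∀ (m n : ℕ), y ^ n * x ^ m = c ^ (m * n) • (x ^ m * y ^ n) := by
  have base : ∀ m : ℕ, y * x ^ m = c ^ m • (x ^ m * y) := by
    intro m
    induction m with
    | zero => simp
    | succ m ih =>
      calc y * x ^ (m + 1) = y * x ^ m * x := by rw [pow_succ, ← mul_assoc]
        _ = c ^ m • (x ^ m * y * x) := by rw [ih, smul_mul_assoc]
        _ = c ^ m • (x ^ m * (c • (x * y))) := by rw [mul_assoc, h]
        _ = (c ^ m * c) • (x ^ m * x * y) := by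
              rw [mul_smul_comm, smul_smul, mul_assoc]
        _ = c ^ (m + 1) • (x ^ (m + 1) * y) := by rw [pow_succ, pow_succ]
  intro m n
  induction n with
  | zero => simp
  | succ n ih =>
    calc y ^ (n + 1) * x ^ m = y ^ n * (y * x ^ m) := by rw [pow_succ, mul_assoc]
      _ = c ^ m • (y ^ n * (x ^ m * y)) := by rw [base, mul_smul_comm]
      _ = c ^ m • (y ^ n * x ^ m * y) := by rw [mul_assoc]
      _ = (c ^ m * c ^ (m * n)) • (x ^ m * y ^ n * y) := by
            rw [ih, smul_mul_assoc, smul_smul]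
      _ = c ^ (m * (n + 1)) • (x ^ m * y ^ (n + 1)) := by
            rw [← pow_add, mul_assoc, ← pow_succ]
            congr 2
            ring

section prod

variable {u : K} {x₁ x₂ x₃ : R}
variable (c21 : x₂ * x₁ = u • (x₁ * x₂)) (c31 : x₃ * x₁ = u • (x₁ * x₃))
  (c32 : x₃ * x₂ = u • (x₂ * x₃))

include c21 c31 in
lemma mulB1 (m : ℕ × ℕ × ℕ) (a' : ℕ) :
    Bm x₁ x₂ x₃ m * x₁ ^ a' = u ^ (a' * (m.2.1 + m.2.2)) • Bm x₁ x₂ x₃ (m + (a', 0, 0)) := by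
  obtain ⟨a, b, c⟩ := m
  show x₁ ^ a * x₂ ^ b * x₃ ^ c * x₁ ^ a' = _
  show _ = u ^ (a' * (b + c)) • (x₁ ^ (a + a') * x₂ ^ (b + 0) * x₃ ^ (c + 0))
  calc x₁ ^ a * x₂ ^ b * x₃ ^ c * x₁ ^ a'
      = x₁ ^ a * x₂ ^ b * (x₃ ^ c * x₁ ^ a') := by rw [mul_assoc]
    _ = u ^ (a' * c) • (x₁ ^ a * x₂ ^ b * (x₁ ^ a' * x₃ ^ c)) := by
          rw [comm_pow c31, mul_smul_comm]
    _ = u ^ (a' * c) • (x₁ ^ a * (x₂ ^ b * x₁ ^ a') * x₃ ^ c) := by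
          congr 1; simp only [mul_assoc]
    _ = (u ^ (a' * c) * u ^ (a' * b)) • (x₁ ^ a * (x₁ ^ a' * x₂ ^ b) * x₃ ^ c) := by
          rw [comm_pow c21, mul_smul_comm, smul_mul_assoc, smul_smul]
    _ = u ^ (a' * (b + c)) • (x₁ ^ (a + a') * x₂ ^ (b + 0) * x₃ ^ (c + 0)) := by
          rw [← pow_add, ← mul_assoc, ← pow_add]
          congr 2
          ring

include c32 in
lemma mulB2 (m : ℕ × ℕ × ℕ) (b' : ℕ) :
    Bm x₁ x₂ x₃ m * x₂ ^ b' = u ^ (b' * m.2.2) • Bm x₁ x₂ x₃ (m + (0, b', 0)) := by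
  obtain ⟨a, b, c⟩ := m
  show x₁ ^ a * x₂ ^ b * x₃ ^ c * x₂ ^ b' = _
  show _ = u ^ (b' * c) • (x₁ ^ (a + 0) * x₂ ^ (b + b') * x₃ ^ (c + 0))
  calc x₁ ^ a * x₂ ^ b * x₃ ^ c * x₂ ^ b'
      = x₁ ^ a * x₂ ^ b * (x₃ ^ c * x₂ ^ b') := by rw [mul_assoc]
    _ = u ^ (b' * c) • (x₁ ^ a * x₂ ^ b * (x₂ ^ b' * x₃ ^ c)) := by
          rw [comm_pow c32, mul_smul_comm]
    _ = u ^ (b' * c) • (x₁ ^ (a + 0) * x₂ ^ (b + b') * x₃ ^ (c + 0)) := by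
          congr 1
          rw [Nat.add_zero, Nat.add_zero, pow_add]
          simp only [mul_assoc]

lemma mulB3 (m : ℕ × ℕ × ℕ) (c' : ℕ) :
    Bm x₁ x₂ x₃ m * x₃ ^ c' = Bm x₁ x₂ x₃ (m + (0, 0, c')) := by
  obtain ⟨a, b, c⟩ := m
  show x₁ ^ a * x₂ ^ b * x₃ ^ c * x₃ ^ c' = x₁ ^ (a + 0) * x₂ ^ (b + 0) * x₃ ^ (c + c')
  rw [Nat.add_zero, Nat.add_zero, mul_assoc, ← pow_add]

include c21 c31 c32 in
lemma mulBB (m n : ℕ × ℕ × ℕ) :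
    Bm x₁ x₂ x₃ m * Bm x₁ x₂ x₃ n
      = u ^ kap m n • Bm x₁ x₂ x₃ (m + n) := by
  obtain ⟨a', b', c'⟩ := n
  have hm2 : (m + (a', 0, 0)).2.2 = m.2.2 := by obtain ⟨a, b, c⟩ := m; rfl
  have hsum : m + (a', 0, 0) + (0, b', 0) + (0, 0, c') = m + (a', b', c') := by
    obtain ⟨a, b, c⟩ := m; simp [Prod.ext_iff]
  calc Bm x₁ x₂ x₃ m * (x₁ ^ a' * x₂ ^ b' * x₃ ^ c')
      = Bm x₁ x₂ x₃ m * x₁ ^ a' * x₂ ^ b' * x₃ ^ c' := by simp only [mul_assoc]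
    _ = u ^ (a' * (m.2.1 + m.2.2)) • (Bm x₁ x₂ x₃ (m + (a', 0, 0)) * x₂ ^ b' * x₃ ^ c') := by
          rw [mulB1 c21 c31, smul_mul_assoc, smul_mul_assoc]
    _ = (u ^ (a' * (m.2.1 + m.2.2)) * u ^ (b' * m.2.2)) •
          (Bm x₁ x₂ x₃ (m + (a', 0, 0) + (0, b', 0)) * x₃ ^ c') := by
          rw [mulB2 c32, hm2, smul_mul_assoc, smul_smul]
    _ = u ^ kap m (a', b', c') • Bm x₁ x₂ x₃ (m + (a', b', c')) := by
          rw [mulB3, hsum, ← pow_add]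
          rfl

end prod





lemma base_cancel {T A B c c' : ℕ} (hc : c < T) (hc' : c' < T)
    (h : A * T + c = B * T + c') : A = B ∧ c = c' := by
  rcases le_total A B with hle | hle
  · obtain ⟨d, rfl⟩ := Nat.exists_eq_add_of_le hle
    rw [add_mul, add_assoc] at h
    have h2 : c = d * T + c' := Nat.add_left_cancel h
    rcases Nat.eq_zero_or_pos d with rfl | hd
    · constructor <;> omega
    · exfalso
      have : T ≤ d * T := Nat.le_mul_of_pos_left T hd
      omega
  · obtain ⟨d, rfl⟩ := Nat.exists_eq_add_of_le hle
    rw [add_mul, add_assoc] at h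
    have h2 : d * T + c = c' := (Nat.add_left_cancel h.symm).symm
    rcases Nat.eq_zero_or_pos d with rfl | hd
    · constructor <;> omega
    · exfalso
      have : T ≤ d * T := Nat.le_mul_of_pos_left T hd
      omega

def LL (T : ℕ) (m : ℕ × ℕ × ℕ) : ℕ := (m.1 * T + m.2.1) * T + m.2.2

lemma LL_add (T : ℕ) (m n : ℕ × ℕ × ℕ) : LL T (m + n) = LL T m + LL T n := by
  obtain ⟨a, b, c⟩ := m; obtain ⟨a', b', c'⟩ := n
  show ((a + a') * T + (b + b')) * T + (c + c') = _
  unfold LL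
  ring

lemma LL_inj {T : ℕ} {m n : ℕ × ℕ × ℕ}
    (h1 : m.1 < T ∧ m.2.1 < T ∧ m.2.2 < T) (h2 : n.1 < T ∧ n.2.1 < T ∧ n.2.2 < T)
    (h : LL T m = LL T n) : m = n := by
  obtain ⟨ha, hb, hc⟩ := h1
  obtain ⟨ha', hb', hc'⟩ := h2
  obtain ⟨h3, h4⟩ := base_cancel hc hc' h
  obtain ⟨h5, h6⟩ := base_cancel hb hb' h3
  obtain ⟨a, b, c⟩ := m; obtain ⟨a', b', c'⟩ := n
  simp only [Prod.ext_iff]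
  exact ⟨h5, h6, h4⟩


section repr

variable (u : K) (b : Module.Basis (ℕ × ℕ × ℕ) K R)
variable (hB : ∀ m n, b m * b n = u ^ kap m n • b (m + n))

include hB in
lemma reprMul (r s : R) (k : ℕ × ℕ × ℕ) :
    b.repr (r * s) k =
      ∑ n ∈ (b.repr r).support, ∑ m ∈ (b.repr s).support,
        if n + m = k then b.repr r n * b.repr s m * u ^ kap n m else 0 := by
  have hr : r = ∑ n ∈ (b.repr r).support, b.repr r n • b n := by
    conv_lhs => rw [← b.linearCombination_repr r]
    rw [Finsupp.linearCombination_apply, Finsupp.sum]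
  have hs : s = ∑ m ∈ (b.repr s).support, b.repr s m • b m := by
    conv_lhs => rw [← b.linearCombination_repr s]
    rw [Finsupp.linearCombination_apply, Finsupp.sum]
  conv_lhs => rw [hr, hs]
  rw [Finset.sum_mul_sum]
  simp only [map_sum, Finsupp.finset_sum_apply]
  refine Finset.sum_congr rfl fun n hn => Finset.sum_congr rfl fun m hm => ?_
  rw [smul_mul_assoc, mul_smul_comm, smul_smul, hB, smul_smul, map_smul, Finsupp.smul_apply,
    b.repr_self, Finsupp.single_apply, smul_eq_mul, mul_ite, mul_one, mul_zero]

include hB in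
lemma mem_supp_mul (r s : R) (k : ℕ × ℕ × ℕ) (hk : b.repr (r * s) k ≠ 0) :
    ∃ n ∈ (b.repr r).support, ∃ m ∈ (b.repr s).support, n + m = k := by
  by_contra hcon
  push_neg at hcon
  apply hk
  rw [reprMul u b hB]
  refine Finset.sum_eq_zero fun n hn => Finset.sum_eq_zero fun m hm => ?_
  rw [if_neg (hcon n hn m hm)]

include hB in
lemma repr_mul_unique (r s : R) (N M : ℕ × ℕ × ℕ)
    (huniq : ∀ n ∈ (b.repr r).support, ∀ m ∈ (b.repr s).support,
      n + m = N + M → n = N ∧ m = M) :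
    b.repr (r * s) (N + M) = b.repr r N * b.repr s M * u ^ kap N M := by
  classical
  rw [reprMul u b hB]
  rw [Finset.sum_eq_single N]
  · rw [Finset.sum_eq_single M]
    · rw [if_pos rfl]
    · intro m hm hne
      by_cases hN : N ∈ (b.repr r).support
      · rw [if_neg]
        intro hsum
        exact hne (huniq N hN m hm hsum).2
      · by_cases hsum : N + m = N + M
        · rw [if_pos hsum, Finsupp.notMem_support_iff.mp hN]
          ring
        · rw [if_neg hsum]
    · intro hM
      rw [if_pos rfl, Finsupp.notMem_support_iff.mp hM]
      ring
  · intro n hn hne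
    refine Finset.sum_eq_zero fun m hm => ?_
    rw [if_neg]
    intro hsum
    exact hne (huniq n hn m hm hsum).1
  · intro hN
    refine Finset.sum_eq_zero fun m hm => ?_
    by_cases hsum : N + m = N + M
    · rw [if_pos hsum, Finsupp.notMem_support_iff.mp hN]
      ring
    · rw [if_neg hsum]

include hB in
lemma repr_mul_basis (r : R) (e m : ℕ × ℕ × ℕ) :
    b.repr (r * b e) (m + e) = b.repr r m * u ^ kap m e := by
  have h := repr_mul_unique u b hB r (b e) m e (by
    intro n hn m' hm' hsum
    rw [b.repr_self] at hm'
    have hm'e : m' = e := Finset.mem_singleton.mp (Finsupp.support_single_subset hm')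
    rw [hm'e] at hsum
    exact ⟨add_right_cancel hsum, hm'e⟩)
  rw [h, b.repr_self, Finsupp.single_apply, if_pos rfl, mul_one]

include hB in
lemma repr_basis_mul (r : R) (e m : ℕ × ℕ × ℕ) :
    b.repr (b e * r) (e + m) = b.repr r m * u ^ kap e m := by
  have h := repr_mul_unique u b hB (b e) r e m (by
    intro n hn m' hm' hsum
    rw [b.repr_self] at hn
    have hne : n = e := Finset.mem_singleton.mp (Finsupp.support_single_subset hn)
    rw [hne] at hsum
    exact ⟨hne, add_left_cancel hsum⟩)
  rw [h, b.repr_self, Finsupp.single_apply, if_pos rfl, one_mul]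

end repr

section factor

variable (u : K) (hu : u ≠ 0) (b : Module.Basis (ℕ × ℕ × ℕ) K R)
variable (hB : ∀ m n, b m * b n = u ^ kap m n • b (m + n))

include hB hu in
lemma factor_left (Y Z : R) (e : ℕ × ℕ × ℕ) (hY : b.repr Y ≠ 0)
    (heq : Z * Y = Y * b e) : ∃ lam : K, Z = lam • b e := by
  classical
  suffices hsupp : ∀ n ∈ (b.repr Z).support, n = e by
    refine ⟨b.repr Z e, ?_⟩
    apply b.repr.injective
    rw [map_smul, b.repr_self]
    ext j
    rw [Finsupp.smul_apply, Finsupp.single_apply, smul_eq_mul]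
    by_cases hj : e = j
    · subst hj; simp
    · rw [if_neg hj, mul_zero]
      refine Finsupp.notMem_support_iff.mp fun hmem => hj ?_
      exact (hsupp j hmem).symm
  have hgne : (b.repr Y).support.Nonempty := by
    rw [Finsupp.support_nonempty_iff]; exact hY
  have hfne : (b.repr Z).support.Nonempty := by
    rcases Finset.eq_empty_or_nonempty (b.repr Z).support with h0 | h
    · exfalso
      have hZ0 : Z = 0 := by
        have := Finsupp.support_eq_empty.mp h0
        exact b.repr.map_eq_zero_iff.mp this
      obtain ⟨m0, hm0⟩ := hgne
      have hc : b.repr (Y * b e) (m0 + e) ≠ 0 := by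
        rw [repr_mul_basis u b hB]
        exact mul_ne_zero (Finsupp.mem_support_iff.mp hm0) (pow_ne_zero _ hu)
      rw [← heq, hZ0, zero_mul, map_zero] at hc
      exact hc rfl
    · exact h
  set U : Finset (ℕ × ℕ × ℕ) :=
    ((b.repr Z).support ∪ (b.repr Y).support) ∪ {e} with hU
  set T : ℕ := 1 + U.sup (fun m => m.1 + m.2.1 + m.2.2) with hT
  have hbound : ∀ m ∈ U, m.1 < T ∧ m.2.1 < T ∧ m.2.2 < T := by
    intro m hm
    have h1 : m.1 + m.2.1 + m.2.2 ≤ U.sup (fun m => m.1 + m.2.1 + m.2.2) :=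
      Finset.le_sup (f := fun m : ℕ × ℕ × ℕ => m.1 + m.2.1 + m.2.2) hm
    refine ⟨by omega, by omega, by omega⟩
  have hZU : ∀ n ∈ (b.repr Z).support, n ∈ U := fun n hn =>
    Finset.mem_union_left _ (Finset.mem_union_left _ hn)
  have hYU : ∀ m ∈ (b.repr Y).support, m ∈ U := fun m hm =>
    Finset.mem_union_left _ (Finset.mem_union_right _ hm)
  have heU : e ∈ U := Finset.mem_union_right _ (Finset.mem_singleton_self e)
  obtain ⟨NM, hNM, hNMmax⟩ := Finset.exists_max_image (b.repr Z).support (LL T) hfne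
  obtain ⟨Nm, hNm, hNmmin⟩ := Finset.exists_min_image (b.repr Z).support (LL T) hfne
  obtain ⟨MM, hMM, hMMmax⟩ := Finset.exists_max_image (b.repr Y).support (LL T) hgne
  obtain ⟨Mm, hMm, hMmmin⟩ := Finset.exists_min_image (b.repr Y).support (LL T) hgne
  -- upper bound : LL T NM ≤ LL T e
  have hup : LL T NM ≤ LL T e := by
    have hcoef : b.repr (Z * Y) (NM + MM) ≠ 0 := by
      rw [repr_mul_unique u b hB Z Y NM MM (by
        intro n hn m hm hsum
        have hL : LL T n + LL T m = LL T NM + LL T MM := by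
          rw [← LL_add, ← LL_add, hsum]
        have h1 := hNMmax n hn
        have h2 := hMMmax m hm
        have e1 : LL T n = LL T NM := by omega
        have e2 : LL T m = LL T MM := by omega
        exact ⟨LL_inj (hbound n (hZU n hn)) (hbound NM (hZU NM hNM)) e1,
          LL_inj (hbound m (hYU m hm)) (hbound MM (hYU MM hMM)) e2⟩)]
      exact mul_ne_zero (mul_ne_zero (Finsupp.mem_support_iff.mp hNM)
        (Finsupp.mem_support_iff.mp hMM)) (pow_ne_zero _ hu)
    rw [heq] at hcoef
    obtain ⟨n, hn, m', hm', hsum⟩ := mem_supp_mul u b hB Y (b e) _ hcoef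
    rw [b.repr_self] at hm'
    have hm'e : m' = e := Finset.mem_singleton.mp (Finsupp.support_single_subset hm')
    rw [hm'e] at hsum
    have hL : LL T n + LL T e = LL T NM + LL T MM := by rw [← LL_add, ← LL_add, hsum]
    have := hMMmax n hn
    omega
  have hdown : LL T e ≤ LL T NM := by
    have hcoef : b.repr (Y * b e) (MM + e) ≠ 0 := by
      rw [repr_mul_basis u b hB]
      exact mul_ne_zero (Finsupp.mem_support_iff.mp hMM) (pow_ne_zero _ hu)
    rw [← heq] at hcoef
    obtain ⟨n, hn, m, hm, hsum⟩ := mem_supp_mul u b hB Z Y _ hcoef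
    have hL : LL T n + LL T m = LL T MM + LL T e := by rw [← LL_add, ← LL_add, hsum]
    have := hNMmax n hn
    have := hMMmax m hm
    omega
  have hNMe : NM = e := LL_inj (hbound NM (hZU NM hNM)) (hbound e heU) (le_antisymm hup hdown)
  -- lower versions
  have hup' : LL T e ≤ LL T Nm := by
    have hcoef : b.repr (Z * Y) (Nm + Mm) ≠ 0 := by
      rw [repr_mul_unique u b hB Z Y Nm Mm (by
        intro n hn m hm hsum
        have hL : LL T n + LL T m = LL T Nm + LL T Mm := by
          rw [← LL_add, ← LL_add, hsum]
        have h1 := hNmmin n hn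
        have h2 := hMmmin m hm
        have e1 : LL T n = LL T Nm := by omega
        have e2 : LL T m = LL T Mm := by omega
        exact ⟨LL_inj (hbound n (hZU n hn)) (hbound Nm (hZU Nm hNm)) e1,
          LL_inj (hbound m (hYU m hm)) (hbound Mm (hYU Mm hMm)) e2⟩)]
      exact mul_ne_zero (mul_ne_zero (Finsupp.mem_support_iff.mp hNm)
        (Finsupp.mem_support_iff.mp hMm)) (pow_ne_zero _ hu)
    rw [heq] at hcoef
    obtain ⟨n, hn, m', hm', hsum⟩ := mem_supp_mul u b hB Y (b e) _ hcoef
    rw [b.repr_self] at hm'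
    have hm'e : m' = e := Finset.mem_singleton.mp (Finsupp.support_single_subset hm')
    rw [hm'e] at hsum
    have hL : LL T n + LL T e = LL T Nm + LL T Mm := by rw [← LL_add, ← LL_add, hsum]
    have := hMmmin n hn
    omega
  have hdown' : LL T Nm ≤ LL T e := by
    have hcoef : b.repr (Y * b e) (Mm + e) ≠ 0 := by
      rw [repr_mul_basis u b hB]
      exact mul_ne_zero (Finsupp.mem_support_iff.mp hMm) (pow_ne_zero _ hu)
    rw [← heq] at hcoef
    obtain ⟨n, hn, m, hm, hsum⟩ := mem_supp_mul u b hB Z Y _ hcoef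
    have hL : LL T n + LL T m = LL T Mm + LL T e := by rw [← LL_add, ← LL_add, hsum]
    have := hNmmin n hn
    have := hMmmin m hm
    omega
  have hNme : Nm = e := LL_inj (hbound Nm (hZU Nm hNm)) (hbound e heU)
    (le_antisymm hdown' hup')
  intro n hn
  have h1 := hNMmax n hn
  have h2 := hNmmin n hn
  rw [hNMe] at h1
  rw [hNme] at h2
  exact LL_inj (hbound n (hZU n hn)) (hbound e heU) (le_antisymm h1 h2)

include hB hu in
lemma factor_right (Y W : R) (e : ℕ × ℕ × ℕ) (hY : b.repr Y ≠ 0)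
    (heq : Y * W = b e * Y) : ∃ lam : K, W = lam • b e := by
  classical
  suffices hsupp : ∀ n ∈ (b.repr W).support, n = e by
    refine ⟨b.repr W e, ?_⟩
    apply b.repr.injective
    rw [map_smul, b.repr_self]
    ext j
    rw [Finsupp.smul_apply, Finsupp.single_apply, smul_eq_mul]
    by_cases hj : e = j
    · subst hj; simp
    · rw [if_neg hj, mul_zero]
      refine Finsupp.notMem_support_iff.mp fun hmem => hj ?_
      exact (hsupp j hmem).symm
  have hgne : (b.repr Y).support.Nonempty := by
    rw [Finsupp.support_nonempty_iff]; exact hY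
  have hfne : (b.repr W).support.Nonempty := by
    rcases Finset.eq_empty_or_nonempty (b.repr W).support with h0 | h
    · exfalso
      have hW0 : W = 0 := by
        have := Finsupp.support_eq_empty.mp h0
        exact b.repr.map_eq_zero_iff.mp this
      obtain ⟨m0, hm0⟩ := hgne
      have hc : b.repr (b e * Y) (e + m0) ≠ 0 := by
        rw [repr_basis_mul u b hB]
        exact mul_ne_zero (Finsupp.mem_support_iff.mp hm0) (pow_ne_zero _ hu)
      rw [← heq, hW0, mul_zero, map_zero] at hc
      exact hc rfl
    · exact h
  set U : Finset (ℕ × ℕ × ℕ) :=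
    ((b.repr W).support ∪ (b.repr Y).support) ∪ {e} with hU
  set T : ℕ := 1 + U.sup (fun m => m.1 + m.2.1 + m.2.2) with hT
  have hbound : ∀ m ∈ U, m.1 < T ∧ m.2.1 < T ∧ m.2.2 < T := by
    intro m hm
    have h1 : m.1 + m.2.1 + m.2.2 ≤ U.sup (fun m => m.1 + m.2.1 + m.2.2) :=
      Finset.le_sup (f := fun m : ℕ × ℕ × ℕ => m.1 + m.2.1 + m.2.2) hm
    refine ⟨by omega, by omega, by omega⟩
  have hZU : ∀ n ∈ (b.repr W).support, n ∈ U := fun n hn =>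
    Finset.mem_union_left _ (Finset.mem_union_left _ hn)
  have hYU : ∀ m ∈ (b.repr Y).support, m ∈ U := fun m hm =>
    Finset.mem_union_left _ (Finset.mem_union_right _ hm)
  have heU : e ∈ U := Finset.mem_union_right _ (Finset.mem_singleton_self e)
  obtain ⟨NM, hNM, hNMmax⟩ := Finset.exists_max_image (b.repr W).support (LL T) hfne
  obtain ⟨Nm, hNm, hNmmin⟩ := Finset.exists_min_image (b.repr W).support (LL T) hfne
  obtain ⟨MM, hMM, hMMmax⟩ := Finset.exists_max_image (b.repr Y).support (LL T) hgne
  obtain ⟨Mm, hMm, hMmmin⟩ := Finset.exists_min_image (b.repr Y).support (LL T) hgne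
  have hup : LL T NM ≤ LL T e := by
    have hcoef : b.repr (Y * W) (MM + NM) ≠ 0 := by
      rw [repr_mul_unique u b hB Y W MM NM (by
        intro m hm n hn hsum
        have hL : LL T m + LL T n = LL T MM + LL T NM := by
          rw [← LL_add, ← LL_add, hsum]
        have h1 := hNMmax n hn
        have h2 := hMMmax m hm
        have e1 : LL T n = LL T NM := by omega
        have e2 : LL T m = LL T MM := by omega
        exact ⟨LL_inj (hbound m (hYU m hm)) (hbound MM (hYU MM hMM)) e2,
          LL_inj (hbound n (hZU n hn)) (hbound NM (hZU NM hNM)) e1⟩)]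
      exact mul_ne_zero (mul_ne_zero (Finsupp.mem_support_iff.mp hMM)
        (Finsupp.mem_support_iff.mp hNM)) (pow_ne_zero _ hu)
    rw [heq] at hcoef
    obtain ⟨n, hn, m', hm', hsum⟩ := mem_supp_mul u b hB (b e) Y _ hcoef
    rw [b.repr_self] at hn
    have hne : n = e := Finset.mem_singleton.mp (Finsupp.support_single_subset hn)
    rw [hne] at hsum
    have hL : LL T e + LL T m' = LL T MM + LL T NM := by rw [← LL_add, ← LL_add, hsum]
    have := hMMmax m' hm'
    omega
  have hdown : LL T e ≤ LL T NM := by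
    have hcoef : b.repr (b e * Y) (e + MM) ≠ 0 := by
      rw [repr_basis_mul u b hB]
      exact mul_ne_zero (Finsupp.mem_support_iff.mp hMM) (pow_ne_zero _ hu)
    rw [← heq] at hcoef
    obtain ⟨m, hm, n, hn, hsum⟩ := mem_supp_mul u b hB Y W _ hcoef
    have hL : LL T m + LL T n = LL T e + LL T MM := by rw [← LL_add, ← LL_add, hsum]
    have := hNMmax n hn
    have := hMMmax m hm
    omega
  have hNMe : NM = e := LL_inj (hbound NM (hZU NM hNM)) (hbound e heU) (le_antisymm hup hdown)
  have hup' : LL T e ≤ LL T Nm := by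
    have hcoef : b.repr (Y * W) (Mm + Nm) ≠ 0 := by
      rw [repr_mul_unique u b hB Y W Mm Nm (by
        intro m hm n hn hsum
        have hL : LL T m + LL T n = LL T Mm + LL T Nm := by
          rw [← LL_add, ← LL_add, hsum]
        have h1 := hNmmin n hn
        have h2 := hMmmin m hm
        have e1 : LL T n = LL T Nm := by omega
        have e2 : LL T m = LL T Mm := by omega
        exact ⟨LL_inj (hbound m (hYU m hm)) (hbound Mm (hYU Mm hMm)) e2,
          LL_inj (hbound n (hZU n hn)) (hbound Nm (hZU Nm hNm)) e1⟩)]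
      exact mul_ne_zero (mul_ne_zero (Finsupp.mem_support_iff.mp hMm)
        (Finsupp.mem_support_iff.mp hNm)) (pow_ne_zero _ hu)
    rw [heq] at hcoef
    obtain ⟨n, hn, m', hm', hsum⟩ := mem_supp_mul u b hB (b e) Y _ hcoef
    rw [b.repr_self] at hn
    have hne : n = e := Finset.mem_singleton.mp (Finsupp.support_single_subset hn)
    rw [hne] at hsum
    have hL : LL T e + LL T m' = LL T Mm + LL T Nm := by rw [← LL_add, ← LL_add, hsum]
    have := hMmmin m' hm'
    omega
  have hdown' : LL T Nm ≤ LL T e := by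
    have hcoef : b.repr (b e * Y) (e + Mm) ≠ 0 := by
      rw [repr_basis_mul u b hB]
      exact mul_ne_zero (Finsupp.mem_support_iff.mp hMm) (pow_ne_zero _ hu)
    rw [← heq] at hcoef
    obtain ⟨m, hm, n, hn, hsum⟩ := mem_supp_mul u b hB Y W _ hcoef
    have hL : LL T m + LL T n = LL T e + LL T Mm := by rw [← LL_add, ← LL_add, hsum]
    have := hNmmin n hn
    have := hMmmin m hm
    omega
  have hNme : Nm = e := LL_inj (hbound Nm (hZU Nm hNm)) (hbound e heU)
    (le_antisymm hdown' hup')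
  intro n hn
  have h1 := hNMmax n hn
  have h2 := hNmmin n hn
  rw [hNMe] at h1
  rw [hNme] at h2
  exact LL_inj (hbound n (hZU n hn)) (hbound e heU) (le_antisymm h1 h2)

end factor

end QuantumAffine3Aux

/-- Every unipotent automorphism of the quantum affine space
`O_q(K³)` (`q` not a root of unity), graded with `deg x_i = 1`, is of the form
`x₁ ↦ x₁`, `x₂ ↦ x₂ + ξ x₁x₃`, `x₃ ↦ x₃`. -/
theorem unipotent_automorphisms_quantum_affine_3space {K R : Type*} [Field K] [Ring R]
    [Algebra K R] (q : Kˣ) (hq : ∀ k : ℕ, 0 < k → q ^ k ≠ 1)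
    (x₁ x₂ x₃ : R)
    (h12 : x₁ * x₂ = (q : K) • (x₂ * x₁))
    (h13 : x₁ * x₃ = (q : K) • (x₃ * x₁))
    (h23 : x₂ * x₃ = (q : K) • (x₃ * x₂))
    (hPBW : LinearIndependent K
        (fun m : ℕ × ℕ × ℕ => x₁ ^ m.1 * x₂ ^ m.2.1 * x₃ ^ m.2.2) ∧
      Submodule.span K
          (Set.range fun m : ℕ × ℕ × ℕ => x₁ ^ m.1 * x₂ ^ m.2.1 * x₃ ^ m.2.2) = ⊤)
    (ψ : R ≃ₐ[K] R)
    (hunip : ∀ (m : ℕ) (r : R),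
      r ∈ Submodule.span K
        {w : R | ∃ a b c : ℕ, a + b + c = m ∧ w = x₁ ^ a * x₂ ^ b * x₃ ^ c} →
      ψ r - r ∈ Submodule.span K
        {w : R | ∃ a b c : ℕ, m + 1 ≤ a + b + c ∧ w = x₁ ^ a * x₂ ^ b * x₃ ^ c}) :
    ψ x₁ = x₁ ∧ ψ x₃ = x₃ ∧ ∃ ξ : K, ψ x₂ = x₂ + ξ • (x₁ * x₃) := by
  classical
  obtain ⟨hli, hsp⟩ := hPBW
  set u : K := ((q⁻¹ : Kˣ) : K) with hu_def
  have hu0 : u ≠ 0 := Units.ne_zero q⁻¹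
  have hqu : (q : K) * u = 1 := Units.mul_inv q
  have hqu' : u * (q : K) = 1 := Units.inv_mul q
  have c21 : x₂ * x₁ = u • (x₁ * x₂) := by
    rw [h12, smul_smul, hqu', one_smul]
  have c31 : x₃ * x₁ = u • (x₁ * x₃) := by
    rw [h13, smul_smul, hqu', one_smul]
  have c32 : x₃ * x₂ = u • (x₂ * x₃) := by
    rw [h23, smul_smul, hqu', one_smul]
  set b : Module.Basis (ℕ × ℕ × ℕ) K R := Module.Basis.mk hli (le_of_eq hsp.symm) with hbdef
  have hb : ∀ m : ℕ × ℕ × ℕ, b m = x₁ ^ m.1 * x₂ ^ m.2.1 * x₃ ^ m.2.2 := fun m => by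
    rw [hbdef, Module.Basis.mk_apply]
  have hB : ∀ m n, b m * b n = u ^ QuantumAffine3Aux.kap m n • b (m + n) := by
    intro m n
    rw [hb, hb, hb]
    exact QuantumAffine3Aux.mulBB c21 c31 c32 m n
  -- injectivity of powers of u
  have hqinj : ∀ s t : ℕ, (q : Kˣ) ^ s = q ^ t → s = t := by
    intro s t h3
    by_contra hne
    rcases Nat.lt_or_ge s t with hlt | hge
    · have h4 : q ^ s * q ^ (t - s) = q ^ s * 1 := by
        rw [← pow_add, mul_one, h3]
        congr 1
        omega
      exact hq (t - s) (by omega) (mul_left_cancel h4)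
    · have hlt : t < s := by omega
      have h4 : q ^ t * q ^ (s - t) = q ^ t * 1 := by
        rw [← pow_add, mul_one, ← h3]
        congr 1
        omega
      exact hq (s - t) (by omega) (mul_left_cancel h4)
  have hQ : ∀ s t : ℕ, u ^ s = u ^ t → s = t := by
    intro s t h
    have h' : ((q⁻¹ ^ s : Kˣ) : K) = ((q⁻¹ ^ t : Kˣ) : K) := by
      rw [Units.val_pow_eq_pow_val, Units.val_pow_eq_pow_val]
      exact h
    have h2 : (q⁻¹ : Kˣ) ^ s = q⁻¹ ^ t := Units.val_inj.mp h'
    rw [inv_pow, inv_pow] at h2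
    exact hqinj s t (inv_injective h2)
  -- concrete basis values
  have hb1 : b (1,0,0) = x₁ := by rw [hb]; simp
  have hb2 : b (0,1,0) = x₂ := by rw [hb]; simp
  have hb3 : b (0,0,1) = x₃ := by rw [hb]; simp
  have hb13 : b (1,0,1) = x₁ * x₃ := by rw [hb]; simp
  -- unipotence : degree ≤ 1 coefficients unchanged
  have hlow : ∀ i : ℕ × ℕ × ℕ, i.1 + i.2.1 + i.2.2 = 1 →
      ∀ j : ℕ × ℕ × ℕ, j.1 + j.2.1 + j.2.2 ≤ 1 →
        b.repr (ψ (b i)) j = b.repr (b i) j := by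
    intro i hi j hj
    have h1 : b i ∈ Submodule.span K
        {w : R | ∃ a b' c : ℕ, a + b' + c = 1 ∧ w = x₁ ^ a * x₂ ^ b' * x₃ ^ c} :=
      Submodule.subset_span ⟨i.1, i.2.1, i.2.2, hi, by rw [hb]⟩
    have h2 := hunip 1 (b i) h1
    have h3 : ψ (b i) - b i ∈ Submodule.span K
        (⇑b '' {m : ℕ × ℕ × ℕ | 2 ≤ m.1 + m.2.1 + m.2.2}) := by
      refine Submodule.span_mono ?_ h2
      rintro w ⟨a, b', c, hw, rfl⟩
      exact ⟨(a, b', c), by simpa using hw, hb _⟩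
    have h4 := (Module.Basis.mem_span_image b).mp h3
    have h5 : b.repr (ψ (b i) - b i) j = 0 := by
      by_contra hne
      have hmem : j ∈ ((b.repr (ψ (b i) - b i)).support : Set (ℕ × ℕ × ℕ)) :=
        Finset.mem_coe.mpr (Finsupp.mem_support_iff.mpr hne)
      have := h4 hmem
      simp only [Set.mem_setOf_eq] at this
      omega
    rw [map_sub, Finsupp.sub_apply] at h5
    exact sub_eq_zero.mp h5
  -- coefficients of generators
  have hc1 : b.repr (ψ x₁) (1,0,0) = 1 := by
    have h := hlow (1,0,0) (by norm_num) (1,0,0) (by norm_num)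
    rw [hb1] at h
    rw [h, ← hb1, b.repr_self, Finsupp.single_eq_same]
  have hc2 : b.repr (ψ x₂) (0,1,0) = 1 := by
    have h := hlow (0,1,0) (by norm_num) (0,1,0) (by norm_num)
    rw [hb2] at h
    rw [h, ← hb2, b.repr_self, Finsupp.single_eq_same]
  have hc3 : b.repr (ψ x₃) (0,0,1) = 1 := by
    have h := hlow (0,0,1) (by norm_num) (0,0,1) (by norm_num)
    rw [hb3] at h
    rw [h, ← hb3, b.repr_self, Finsupp.single_eq_same]
  have hY1ne : b.repr (ψ x₁) ≠ 0 := by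
    intro h0
    rw [h0] at hc1
    simp at hc1
  have hY3ne : b.repr (ψ x₃) ≠ 0 := by
    intro h0
    rw [h0] at hc3
    simp at hc3
  -- twist maps
  set σ₁ : R →ₗ[K] R := b.constr K (fun m => ((q : K) ^ (m.2.1 + m.2.2)) • b m) with hσ₁def
  have hσ₁ : ∀ r : R, x₁ * r = σ₁ r * x₁ := by
    intro r
    have hlin : LinearMap.mulLeft K x₁ = (LinearMap.mulRight K x₁).comp σ₁ := by
      apply b.ext
      intro i
      rw [LinearMap.mulLeft_apply, LinearMap.comp_apply, hσ₁def, Module.Basis.constr_basis,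
        LinearMap.mulRight_apply, smul_mul_assoc, ← hb1, hB, hB, smul_smul]
      have hk1 : QuantumAffine3Aux.kap (1,0,0) i = 0 := by simp [QuantumAffine3Aux.kap]
      have hk2 : QuantumAffine3Aux.kap i (1,0,0) = i.2.1 + i.2.2 := by
        simp [QuantumAffine3Aux.kap]
      rw [hk1, hk2, pow_zero, one_smul, ← mul_pow, hqu, one_pow, one_smul,
        add_comm i ((1,0,0) : ℕ × ℕ × ℕ)]
    have h := LinearMap.congr_fun hlin r
    simpa using h
  set σ₃ : R →ₗ[K] R := b.constr K (fun m => ((q : K) ^ (m.1 + m.2.1)) • b m) with hσ₃def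
  have hσ₃ : ∀ r : R, r * x₃ = x₃ * σ₃ r := by
    intro r
    have hlin : LinearMap.mulRight K x₃ = (LinearMap.mulLeft K x₃).comp σ₃ := by
      apply b.ext
      intro i
      rw [LinearMap.mulRight_apply, LinearMap.comp_apply, hσ₃def, Module.Basis.constr_basis,
        LinearMap.mulLeft_apply, mul_smul_comm, ← hb3, hB, hB, smul_smul]
      have hk1 : QuantumAffine3Aux.kap i (0,0,1) = 0 := by simp [QuantumAffine3Aux.kap]
      have hk2 : QuantumAffine3Aux.kap (0,0,1) i = i.1 + i.2.1 := by
        simp [QuantumAffine3Aux.kap]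
      rw [hk1, hk2, pow_zero, one_smul, ← mul_pow, hqu, one_pow, one_smul,
        add_comm i ((0,0,1) : ℕ × ℕ × ℕ)]
    have h := LinearMap.congr_fun hlin r
    simpa using h
  -- ψ x₁ = x₁
  have hpsi1 : ψ x₁ = x₁ := by
    have hZeq : ψ (σ₁ (ψ.symm x₂)) * ψ x₁ = ψ x₁ * b (0,1,0) := by
      calc ψ (σ₁ (ψ.symm x₂)) * ψ x₁ = ψ (σ₁ (ψ.symm x₂) * x₁) := (map_mul ψ _ _).symm
        _ = ψ (x₁ * ψ.symm x₂) := by rw [← hσ₁]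
        _ = ψ x₁ * ψ (ψ.symm x₂) := map_mul ψ _ _
        _ = ψ x₁ * b (0,1,0) := by rw [AlgEquiv.apply_symm_apply, hb2]
    obtain ⟨lam, hlam⟩ := QuantumAffine3Aux.factor_left u hu0 b hB (ψ x₁) _ (0,1,0) hY1ne hZeq
    rw [hlam] at hZeq
    have hco : ∀ m : ℕ × ℕ × ℕ, lam * (b.repr (ψ x₁) m * u ^ m.1)
        = b.repr (ψ x₁) m * u ^ m.2.2 := by
      intro m
      have h1 : b.repr ((lam • b (0,1,0)) * ψ x₁) ((0,1,0) + m)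
          = lam * (b.repr (ψ x₁) m * u ^ QuantumAffine3Aux.kap (0,1,0) m) := by
        rw [smul_mul_assoc, map_smul, Finsupp.smul_apply,
          QuantumAffine3Aux.repr_basis_mul u b hB, smul_eq_mul]
      have h2 : b.repr (ψ x₁ * b (0,1,0)) (m + (0,1,0))
          = b.repr (ψ x₁) m * u ^ QuantumAffine3Aux.kap m (0,1,0) :=
        QuantumAffine3Aux.repr_mul_basis u b hB _ _ _
      rw [hZeq, add_comm ((0,1,0) : ℕ × ℕ × ℕ) m, h2] at h1
      have hk1 : QuantumAffine3Aux.kap (0,1,0) m = m.1 := by simp [QuantumAffine3Aux.kap]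
      have hk2 : QuantumAffine3Aux.kap m (0,1,0) = m.2.2 := by simp [QuantumAffine3Aux.kap]
      rw [hk1, hk2] at h1
      exact h1.symm
    have hlam1 : lam * u = 1 := by
      have h := hco (1,0,0)
      rw [hc1] at h
      simpa using h
    have hs1 : ∀ m ∈ (b.repr (ψ x₁)).support, m.1 = m.2.2 + 1 := by
      intro m hm
      have hYm : b.repr (ψ x₁) m ≠ 0 := Finsupp.mem_support_iff.mp hm
      have h3 : b.repr (ψ x₁) m * u ^ m.1 = b.repr (ψ x₁) m * u ^ (m.2.2 + 1) := by
        calc b.repr (ψ x₁) m * u ^ m.1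
            = lam * u * (b.repr (ψ x₁) m * u ^ m.1) := by rw [hlam1, one_mul]
          _ = (lam * (b.repr (ψ x₁) m * u ^ m.1)) * u := by ring
          _ = (b.repr (ψ x₁) m * u ^ m.2.2) * u := by rw [hco m]
          _ = b.repr (ψ x₁) m * u ^ (m.2.2 + 1) := by rw [pow_succ]; ring
      exact hQ _ _ (mul_left_cancel₀ hYm h3)
    have hZeq3 : ψ (σ₁ (ψ.symm x₃)) * ψ x₁ = ψ x₁ * b (0,0,1) := by
      calc ψ (σ₁ (ψ.symm x₃)) * ψ x₁ = ψ (σ₁ (ψ.symm x₃) * x₁) := (map_mul ψ _ _).symm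
        _ = ψ (x₁ * ψ.symm x₃) := by rw [← hσ₁]
        _ = ψ x₁ * ψ (ψ.symm x₃) := map_mul ψ _ _
        _ = ψ x₁ * b (0,0,1) := by rw [AlgEquiv.apply_symm_apply, hb3]
    obtain ⟨mu, hmu⟩ := QuantumAffine3Aux.factor_left u hu0 b hB (ψ x₁) _ (0,0,1) hY1ne hZeq3
    rw [hmu] at hZeq3
    have hco3 : ∀ m : ℕ × ℕ × ℕ, mu * (b.repr (ψ x₁) m * u ^ (m.1 + m.2.1))
        = b.repr (ψ x₁) m := by
      intro m
      have h1 : b.repr ((mu • b (0,0,1)) * ψ x₁) ((0,0,1) + m)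
          = mu * (b.repr (ψ x₁) m * u ^ QuantumAffine3Aux.kap (0,0,1) m) := by
        rw [smul_mul_assoc, map_smul, Finsupp.smul_apply,
          QuantumAffine3Aux.repr_basis_mul u b hB, smul_eq_mul]
      have h2 : b.repr (ψ x₁ * b (0,0,1)) (m + (0,0,1))
          = b.repr (ψ x₁) m * u ^ QuantumAffine3Aux.kap m (0,0,1) :=
        QuantumAffine3Aux.repr_mul_basis u b hB _ _ _
      rw [hZeq3, add_comm ((0,0,1) : ℕ × ℕ × ℕ) m, h2] at h1
      have hk1 : QuantumAffine3Aux.kap (0,0,1) m = m.1 + m.2.1 := by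
        simp [QuantumAffine3Aux.kap]
      have hk2 : QuantumAffine3Aux.kap m (0,0,1) = 0 := by simp [QuantumAffine3Aux.kap]
      rw [hk1, hk2, pow_zero, mul_one] at h1
      exact h1.symm
    have hmu1 : mu * u = 1 := by
      have h := hco3 (1,0,0)
      rw [hc1] at h
      simpa using h
    have hs2 : ∀ m ∈ (b.repr (ψ x₁)).support, m.1 + m.2.1 = 1 := by
      intro m hm
      have hYm : b.repr (ψ x₁) m ≠ 0 := Finsupp.mem_support_iff.mp hm
      have h3 : b.repr (ψ x₁) m * u ^ (m.1 + m.2.1) = b.repr (ψ x₁) m * u ^ 1 := by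
        calc b.repr (ψ x₁) m * u ^ (m.1 + m.2.1)
            = mu * u * (b.repr (ψ x₁) m * u ^ (m.1 + m.2.1)) := by rw [hmu1, one_mul]
          _ = (mu * (b.repr (ψ x₁) m * u ^ (m.1 + m.2.1))) * u := by ring
          _ = b.repr (ψ x₁) m * u ^ 1 := by rw [hco3 m, pow_one]
      exact hQ _ _ (mul_left_cancel₀ hYm h3)
    have hsub : ∀ m ∈ (b.repr (ψ x₁)).support, m = ((1,0,0) : ℕ × ℕ × ℕ) := by
      intro m hm
      have e1 := hs1 m hm
      have e2 := hs2 m hm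
      have g1 : m.1 = 1 := by omega
      have g2 : m.2.1 = 0 := by omega
      have g3 : m.2.2 = 0 := by omega
      exact Prod.ext g1 (Prod.ext g2 g3)
    have hrepr : b.repr (ψ x₁) = b.repr x₁ := by
      ext j
      by_cases hj : j = ((1,0,0) : ℕ × ℕ × ℕ)
      · subst hj
        rw [hc1, ← hb1, b.repr_self, Finsupp.single_eq_same]
      · have hl : b.repr (ψ x₁) j = 0 := by
          by_contra hne
          exact hj (hsub j (Finsupp.mem_support_iff.mpr hne))
        rw [hl, ← hb1, b.repr_self, Finsupp.single_eq_of_ne hj]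
    exact b.repr.injective hrepr
  -- ψ x₃ = x₃
  have hpsi3 : ψ x₃ = x₃ := by
    have hW1 : ψ x₃ * ψ (σ₃ (ψ.symm x₁)) = b (1,0,0) * ψ x₃ := by
      calc ψ x₃ * ψ (σ₃ (ψ.symm x₁)) = ψ (x₃ * σ₃ (ψ.symm x₁)) := (map_mul ψ _ _).symm
        _ = ψ (ψ.symm x₁ * x₃) := by rw [← hσ₃]
        _ = ψ (ψ.symm x₁) * ψ x₃ := map_mul ψ _ _
        _ = b (1,0,0) * ψ x₃ := by rw [AlgEquiv.apply_symm_apply, hb1]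
    obtain ⟨lam, hlam⟩ := QuantumAffine3Aux.factor_right u hu0 b hB (ψ x₃) _ (1,0,0) hY3ne hW1
    rw [hlam] at hW1
    have hco : ∀ m : ℕ × ℕ × ℕ, lam * (b.repr (ψ x₃) m * u ^ (m.2.1 + m.2.2))
        = b.repr (ψ x₃) m := by
      intro m
      have h1 : b.repr (ψ x₃ * (lam • b (1,0,0))) (m + (1,0,0))
          = lam * (b.repr (ψ x₃) m * u ^ QuantumAffine3Aux.kap m (1,0,0)) := by
        rw [mul_smul_comm, map_smul, Finsupp.smul_apply,
          QuantumAffine3Aux.repr_mul_basis u b hB, smul_eq_mul]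
      have h2 : b.repr (b (1,0,0) * ψ x₃) ((1,0,0) + m)
          = b.repr (ψ x₃) m * u ^ QuantumAffine3Aux.kap (1,0,0) m :=
        QuantumAffine3Aux.repr_basis_mul u b hB _ _ _
      rw [hW1, add_comm m ((1,0,0) : ℕ × ℕ × ℕ), h2] at h1
      have hk1 : QuantumAffine3Aux.kap m (1,0,0) = m.2.1 + m.2.2 := by
        simp [QuantumAffine3Aux.kap]
      have hk2 : QuantumAffine3Aux.kap (1,0,0) m = 0 := by simp [QuantumAffine3Aux.kap]
      rw [hk1, hk2, pow_zero, mul_one] at h1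
      exact h1.symm
    have hlam1 : lam * u = 1 := by
      have h := hco (0,0,1)
      rw [hc3] at h
      simpa using h
    have hs1 : ∀ m ∈ (b.repr (ψ x₃)).support, m.2.1 + m.2.2 = 1 := by
      intro m hm
      have hYm : b.repr (ψ x₃) m ≠ 0 := Finsupp.mem_support_iff.mp hm
      have h3 : b.repr (ψ x₃) m * u ^ (m.2.1 + m.2.2) = b.repr (ψ x₃) m * u ^ 1 := by
        calc b.repr (ψ x₃) m * u ^ (m.2.1 + m.2.2)
            = lam * u * (b.repr (ψ x₃) m * u ^ (m.2.1 + m.2.2)) := by rw [hlam1, one_mul]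
          _ = (lam * (b.repr (ψ x₃) m * u ^ (m.2.1 + m.2.2))) * u := by ring
          _ = b.repr (ψ x₃) m * u ^ 1 := by rw [hco m, pow_one]
      exact hQ _ _ (mul_left_cancel₀ hYm h3)
    have hW2 : ψ x₃ * ψ (σ₃ (ψ.symm x₂)) = b (0,1,0) * ψ x₃ := by
      calc ψ x₃ * ψ (σ₃ (ψ.symm x₂)) = ψ (x₃ * σ₃ (ψ.symm x₂)) := (map_mul ψ _ _).symm
        _ = ψ (ψ.symm x₂ * x₃) := by rw [← hσ₃]
        _ = ψ (ψ.symm x₂) * ψ x₃ := map_mul ψ _ _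
        _ = b (0,1,0) * ψ x₃ := by rw [AlgEquiv.apply_symm_apply, hb2]
    obtain ⟨mu, hmu⟩ := QuantumAffine3Aux.factor_right u hu0 b hB (ψ x₃) _ (0,1,0) hY3ne hW2
    rw [hmu] at hW2
    have hco2 : ∀ m : ℕ × ℕ × ℕ, mu * (b.repr (ψ x₃) m * u ^ m.2.2)
        = b.repr (ψ x₃) m * u ^ m.1 := by
      intro m
      have h1 : b.repr (ψ x₃ * (mu • b (0,1,0))) (m + (0,1,0))
          = mu * (b.repr (ψ x₃) m * u ^ QuantumAffine3Aux.kap m (0,1,0)) := by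
        rw [mul_smul_comm, map_smul, Finsupp.smul_apply,
          QuantumAffine3Aux.repr_mul_basis u b hB, smul_eq_mul]
      have h2 : b.repr (b (0,1,0) * ψ x₃) ((0,1,0) + m)
          = b.repr (ψ x₃) m * u ^ QuantumAffine3Aux.kap (0,1,0) m :=
        QuantumAffine3Aux.repr_basis_mul u b hB _ _ _
      rw [hW2, add_comm m ((0,1,0) : ℕ × ℕ × ℕ), h2] at h1
      have hk1 : QuantumAffine3Aux.kap m (0,1,0) = m.2.2 := by simp [QuantumAffine3Aux.kap]
      have hk2 : QuantumAffine3Aux.kap (0,1,0) m = m.1 := by simp [QuantumAffine3Aux.kap]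
      rw [hk1, hk2] at h1
      exact h1.symm
    have hmu1 : mu * u = 1 := by
      have h := hco2 (0,0,1)
      rw [hc3] at h
      simpa using h
    have hs2 : ∀ m ∈ (b.repr (ψ x₃)).support, m.2.2 = m.1 + 1 := by
      intro m hm
      have hYm : b.repr (ψ x₃) m ≠ 0 := Finsupp.mem_support_iff.mp hm
      have h3 : b.repr (ψ x₃) m * u ^ m.2.2 = b.repr (ψ x₃) m * u ^ (m.1 + 1) := by
        calc b.repr (ψ x₃) m * u ^ m.2.2
            = mu * u * (b.repr (ψ x₃) m * u ^ m.2.2) := by rw [hmu1, one_mul]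
          _ = (mu * (b.repr (ψ x₃) m * u ^ m.2.2)) * u := by ring
          _ = (b.repr (ψ x₃) m * u ^ m.1) * u := by rw [hco2 m]
          _ = b.repr (ψ x₃) m * u ^ (m.1 + 1) := by rw [pow_succ]; ring
      exact hQ _ _ (mul_left_cancel₀ hYm h3)
    have hsub : ∀ m ∈ (b.repr (ψ x₃)).support, m = ((0,0,1) : ℕ × ℕ × ℕ) := by
      intro m hm
      have e1 := hs1 m hm
      have e2 := hs2 m hm
      have g1 : m.1 = 0 := by omega
      have g2 : m.2.1 = 0 := by omega
      have g3 : m.2.2 = 1 := by omega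
      exact Prod.ext g1 (Prod.ext g2 g3)
    have hrepr : b.repr (ψ x₃) = b.repr x₃ := by
      ext j
      by_cases hj : j = ((0,0,1) : ℕ × ℕ × ℕ)
      · subst hj
        rw [hc3, ← hb3, b.repr_self, Finsupp.single_eq_same]
      · have hl : b.repr (ψ x₃) j = 0 := by
          by_contra hne
          exact hj (hsub j (Finsupp.mem_support_iff.mpr hne))
        rw [hl, ← hb3, b.repr_self, Finsupp.single_eq_of_ne hj]
    exact b.repr.injective hrepr
  -- ψ x₂
  have heqV : b (1,0,0) * ψ x₂ = (q : K) • (ψ x₂ * b (1,0,0)) := by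
    rw [hb1]
    calc x₁ * ψ x₂ = ψ x₁ * ψ x₂ := by rw [hpsi1]
      _ = ψ (x₁ * x₂) := (map_mul ψ _ _).symm
      _ = ψ ((q : K) • (x₂ * x₁)) := by rw [h12]
      _ = (q : K) • (ψ x₂ * ψ x₁) := by rw [map_smul, map_mul]
      _ = (q : K) • (ψ x₂ * x₁) := by rw [hpsi1]
  have hcoV : ∀ m ∈ (b.repr (ψ x₂)).support, m.2.1 + m.2.2 = 1 := by
    intro m hm
    have hYm : b.repr (ψ x₂) m ≠ 0 := Finsupp.mem_support_iff.mp hm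
    have h1 : b.repr (b (1,0,0) * ψ x₂) ((1,0,0) + m)
        = b.repr (ψ x₂) m * u ^ QuantumAffine3Aux.kap (1,0,0) m :=
      QuantumAffine3Aux.repr_basis_mul u b hB _ _ _
    have h2 : b.repr ((q : K) • (ψ x₂ * b (1,0,0))) (m + (1,0,0))
        = (q : K) * (b.repr (ψ x₂) m * u ^ QuantumAffine3Aux.kap m (1,0,0)) := by
      rw [map_smul, Finsupp.smul_apply, QuantumAffine3Aux.repr_mul_basis u b hB, smul_eq_mul]
    rw [heqV, add_comm ((1,0,0) : ℕ × ℕ × ℕ) m, h2] at h1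
    have hk1 : QuantumAffine3Aux.kap (1,0,0) m = 0 := by simp [QuantumAffine3Aux.kap]
    have hk2 : QuantumAffine3Aux.kap m (1,0,0) = m.2.1 + m.2.2 := by
      simp [QuantumAffine3Aux.kap]
    rw [hk1, hk2, pow_zero, mul_one] at h1
    -- h1 : q * (Ym * u ^ (m.2.1+m.2.2)) = Ym
    have h3 : b.repr (ψ x₂) m * u ^ (m.2.1 + m.2.2) = b.repr (ψ x₂) m * u ^ 1 := by
      calc b.repr (ψ x₂) m * u ^ (m.2.1 + m.2.2)
          = (q : K) * u * (b.repr (ψ x₂) m * u ^ (m.2.1 + m.2.2)) := by rw [hqu, one_mul]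
        _ = ((q : K) * (b.repr (ψ x₂) m * u ^ (m.2.1 + m.2.2))) * u := by ring
        _ = b.repr (ψ x₂) m * u ^ 1 := by rw [h1, pow_one]
    exact hQ _ _ (mul_left_cancel₀ hYm h3)
  have heqVI : ψ x₂ * b (0,0,1) = (q : K) • (b (0,0,1) * ψ x₂) := by
    rw [hb3]
    calc ψ x₂ * x₃ = ψ x₂ * ψ x₃ := by rw [hpsi3]
      _ = ψ (x₂ * x₃) := (map_mul ψ _ _).symm
      _ = ψ ((q : K) • (x₃ * x₂)) := by rw [h23]
      _ = (q : K) • (ψ x₃ * ψ x₂) := by rw [map_smul, map_mul]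
      _ = (q : K) • (x₃ * ψ x₂) := by rw [hpsi3]
  have hcoVI : ∀ m ∈ (b.repr (ψ x₂)).support, m.1 + m.2.1 = 1 := by
    intro m hm
    have hYm : b.repr (ψ x₂) m ≠ 0 := Finsupp.mem_support_iff.mp hm
    have h1 : b.repr (ψ x₂ * b (0,0,1)) (m + (0,0,1))
        = b.repr (ψ x₂) m * u ^ QuantumAffine3Aux.kap m (0,0,1) :=
      QuantumAffine3Aux.repr_mul_basis u b hB _ _ _
    have h2 : b.repr ((q : K) • (b (0,0,1) * ψ x₂)) ((0,0,1) + m)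
        = (q : K) * (b.repr (ψ x₂) m * u ^ QuantumAffine3Aux.kap (0,0,1) m) := by
      rw [map_smul, Finsupp.smul_apply, QuantumAffine3Aux.repr_basis_mul u b hB, smul_eq_mul]
    rw [heqVI, add_comm m ((0,0,1) : ℕ × ℕ × ℕ), h2] at h1
    have hk1 : QuantumAffine3Aux.kap m (0,0,1) = 0 := by simp [QuantumAffine3Aux.kap]
    have hk2 : QuantumAffine3Aux.kap (0,0,1) m = m.1 + m.2.1 := by
      simp [QuantumAffine3Aux.kap]
    rw [hk1, hk2, pow_zero, mul_one] at h1
    have h3 : b.repr (ψ x₂) m * u ^ (m.1 + m.2.1) = b.repr (ψ x₂) m * u ^ 1 := by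
      calc b.repr (ψ x₂) m * u ^ (m.1 + m.2.1)
          = (q : K) * u * (b.repr (ψ x₂) m * u ^ (m.1 + m.2.1)) := by rw [hqu, one_mul]
        _ = ((q : K) * (b.repr (ψ x₂) m * u ^ (m.1 + m.2.1))) * u := by ring
        _ = b.repr (ψ x₂) m * u ^ 1 := by rw [h1, pow_one]
    exact hQ _ _ (mul_left_cancel₀ hYm h3)
  have hsub2 : ∀ m ∈ (b.repr (ψ x₂)).support,
      m = ((0,1,0) : ℕ × ℕ × ℕ) ∨ m = ((1,0,1) : ℕ × ℕ × ℕ) := by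
    intro m hm
    have e1 := hcoV m hm
    have e2 := hcoVI m hm
    by_cases hb0 : m.2.1 = 0
    · right
      have g1 : m.1 = 1 := by omega
      have g3 : m.2.2 = 1 := by omega
      exact Prod.ext g1 (Prod.ext hb0 g3)
    · left
      have g2 : m.2.1 = 1 := by omega
      have g1 : m.1 = 0 := by omega
      have g3 : m.2.2 = 0 := by omega
      exact Prod.ext g1 (Prod.ext g2 g3)
  refine ⟨hpsi1, hpsi3, b.repr (ψ x₂) (1,0,1), ?_⟩
  have hxr : b.repr (x₂ + b.repr (ψ x₂) (1,0,1) • (x₁ * x₃))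
      = Finsupp.single ((0,1,0) : ℕ × ℕ × ℕ) (1 : K)
        + b.repr (ψ x₂) (1,0,1) • Finsupp.single ((1,0,1) : ℕ × ℕ × ℕ) (1 : K) := by
    rw [map_add, map_smul]
    congr 1
    · rw [← hb2, b.repr_self]
    · congr 1
      rw [← hb13, b.repr_self]
  have hrepr : b.repr (ψ x₂) = b.repr (x₂ + b.repr (ψ x₂) (1,0,1) • (x₁ * x₃)) := by
    rw [hxr]
    ext j
    rw [Finsupp.add_apply, Finsupp.smul_apply, smul_eq_mul]
    by_cases h1 : j = ((0,1,0) : ℕ × ℕ × ℕ)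
    · subst h1
      rw [hc2, Finsupp.single_eq_same, Finsupp.single_eq_of_ne (by decide), mul_zero, add_zero]
    · by_cases h2 : j = ((1,0,1) : ℕ × ℕ × ℕ)
      · subst h2
        rw [Finsupp.single_eq_of_ne (by decide), Finsupp.single_eq_same, mul_one, zero_add]
      · have hl : b.repr (ψ x₂) j = 0 := by
          by_contra hne
          rcases hsub2 j (Finsupp.mem_support_iff.mpr hne) with h | h
          exacts [h1 h, h2 h]
        rw [hl, Finsupp.single_eq_of_ne h1,
          Finsupp.single_eq_of_ne h2, mul_zero, add_zero]
  exact b.repr.injective hrepr
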